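/- For every n ≥ 1 and every k with 0 ≤ k ≤ n, we have (2n-k) · #{π : π is a (b-ac)-avoiding permutation of [n] with exactly k left-to-right minima} = k · C(2n-k, n), where C denotes the binomial coefficient. (Equivalently, the number of such permutations with k left-to-right minima is the ballot number (k/(2n-k))·C(2n-k,n).) -/

import Mathlib

/-- `π` avoids the pattern (b-ac): there are no (0-based) indices `i < j` with
`j + 1 < n` and `π j < π i < π (j+1)`. -/
def AvoidsBdAC (n : ℕ) (π : Equiv.Perm (Fin n)) : Prop :=
  ∀ (i j : ℕ) (hi : i < n) (hj : j + 1 < n), i < j →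
    ¬ (π ⟨j, Nat.lt_of_succ_lt hj⟩ < π ⟨i, hi⟩ ∧
       π ⟨i, hi⟩ < π ⟨j + 1, hj⟩)

/-- The number of left-to-right minima of `π`:
indices `i` such that `π i < π j` for all `j < i`. -/
noncomputable def ltrMin (n : ℕ) (π : Equiv.Perm (Fin n)) : ℕ :=
  {i : Fin n | ∀ j : Fin n, j < i → π i < π j}.ncard

open Equiv

variable {n : ℕ}

/-- Insert the maximal value `n` at position `p` into `σ`. -/
def insMax (σ : Perm (Fin n)) (p : Fin (n+1)) : Perm (Fin (n+1)) :=
  (finSuccEquiv' p).trans ((Equiv.optionCongr σ).trans (finSuccEquiv' (Fin.last n)).symm)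

lemma insMax_self (σ : Perm (Fin n)) (p : Fin (n+1)) : insMax σ p p = Fin.last n := by
  simp [insMax, finSuccEquiv'_at, finSuccEquiv'_symm_none]

lemma insMax_succAbove (σ : Perm (Fin n)) (p : Fin (n+1)) (j : Fin n) :
    insMax σ p (p.succAbove j) = Fin.castSucc (σ j) := by
  simp [insMax, finSuccEquiv'_succAbove, finSuccEquiv'_symm_some, Fin.succAbove_last]

lemma insMax_apply_lt (σ : Perm (Fin n)) (p : Fin (n+1)) (i : Fin (n+1))
    (h : (i:ℕ) < (p:ℕ)) : insMax σ p i = Fin.castSucc (σ ⟨i, by omega⟩) := by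
  have : i = p.succAbove ⟨(i:ℕ), by omega⟩ := by
    rw [Fin.succAbove_of_castSucc_lt]
    · ext; simp
    · rw [Fin.lt_iff_val_lt_val]; simpa using h
  conv_lhs => rw [this]
  rw [insMax_succAbove]

lemma insMax_apply_gt (σ : Perm (Fin n)) (p : Fin (n+1)) (i : Fin (n+1))
    (h : (p:ℕ) < (i:ℕ)) : insMax σ p i = Fin.castSucc (σ ⟨(i:ℕ) - 1, by omega⟩) := by
  have : i = p.succAbove ⟨(i:ℕ) - 1, by omega⟩ := by
    rw [Fin.succAbove_of_le_castSucc]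
    · ext; simp; omega
    · rw [Fin.le_iff_val_le_val]; simp; omega
  conv_lhs => rw [this]
  rw [insMax_succAbove]

lemma insMax_injective2 {σ σ' : Perm (Fin n)} {p p' : Fin (n+1)}
    (h : insMax σ p = insMax σ' p') : σ = σ' ∧ p = p' := by
  have hp : p = p' := by
    have h1 : insMax σ' p' p = Fin.last n := by rw [← h, insMax_self]
    have h2 : insMax σ' p' p' = Fin.last n := insMax_self σ' p'
    exact (insMax σ' p').injective (h1.trans h2.symm)
  subst hp
  refine ⟨?_, rfl⟩
  ext j
  have h1 : insMax σ p (p.succAbove j) = insMax σ' p (p.succAbove j) := by rw [h]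
  rw [insMax_succAbove, insMax_succAbove] at h1
  have := Fin.castSucc_injective n h1
  rw [this]

lemma exists_insMax (π : Perm (Fin (n+1))) : ∃ σ p, π = insMax σ p := by
  set p := π.symm (Fin.last n) with hp
  have hpl : π p = Fin.last n := by rw [hp]; simp
  set e : Option (Fin n) ≃ Option (Fin n) :=
    (finSuccEquiv' p).symm.trans (π.trans (finSuccEquiv' (Fin.last n))) with he
  have hen : e none = none := by
    simp [he, finSuccEquiv'_symm_none, hpl, finSuccEquiv'_at]
  refine ⟨e.removeNone, p, Equiv.ext fun i => ?_⟩
  rcases eq_or_ne i p with rfl | hne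
  · rw [insMax_self, hpl]
  · obtain ⟨j, hj⟩ := Fin.exists_succAbove_eq hne
    subst hj
    rw [insMax_succAbove]
    have hsome : ∃ x', e (some j) = some x' := by
      rcases h' : e (some j) with _ | x'
      · exfalso
        have := e.injective (h'.trans hen.symm)
        simp at this
      · exact ⟨x', rfl⟩
    have h2 : e (some j) = some (e.removeNone j) := (Equiv.removeNone_some e hsome).symm
    have h3 : e (some j) = finSuccEquiv' (Fin.last n) (π (p.succAbove j)) := by
      simp [he, finSuccEquiv'_symm_some]
    rw [h3] at h2
    have h4 := congrArg (finSuccEquiv' (Fin.last n)).symm h2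
    simp only [Equiv.symm_apply_apply, finSuccEquiv'_symm_some, Fin.succAbove_last] at h4
    exact h4

/-! ### Section 3: statistics -/

/-- Finset of left-to-right minima positions. -/
def minF (n : ℕ) (π : Perm (Fin n)) : Finset (Fin n) :=
  Finset.univ.filter (fun i => ∀ j, j < i → π i < π j)

/-- Finset of left-to-right maxima positions. -/
def maxF (n : ℕ) (π : Perm (Fin n)) : Finset (Fin n) :=
  Finset.univ.filter (fun i => ∀ j, j < i → π j < π i)

lemma mem_minF {π : Perm (Fin n)} {i : Fin n} :
    i ∈ minF n π ↔ ∀ j, j < i → π i < π j := by simp [minF]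

lemma mem_maxF {π : Perm (Fin n)} {i : Fin n} :
    i ∈ maxF n π ↔ ∀ j, j < i → π j < π i := by simp [maxF]

lemma zero_mem_minF (hn : 0 < n) (π : Perm (Fin n)) : (⟨0, hn⟩ : Fin n) ∈ minF n π := by
  rw [mem_minF]
  intro j hj
  exact absurd hj (by simp [Fin.lt_iff_val_lt_val])

lemma zero_mem_maxF (hn : 0 < n) (π : Perm (Fin n)) : (⟨0, hn⟩ : Fin n) ∈ maxF n π := by
  rw [mem_maxF]
  intro j hj
  exact absurd hj (by simp [Fin.lt_iff_val_lt_val])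

lemma minF_card_pos (hn : 0 < n) (π : Perm (Fin n)) : 0 < (minF n π).card :=
  Finset.card_pos.mpr ⟨_, zero_mem_minF hn π⟩

lemma maxF_card_pos (hn : 0 < n) (π : Perm (Fin n)) : 0 < (maxF n π).card :=
  Finset.card_pos.mpr ⟨_, zero_mem_maxF hn π⟩

lemma maxF_card_le (π : Perm (Fin n)) : (maxF n π).card ≤ n := by
  exact (Finset.card_le_univ (maxF n π)).trans (by simp)

lemma ltrMin_eq_card (π : Perm (Fin n)) : ltrMin n π = (minF n π).card := by
  rw [ltrMin, ← Set.ncard_coe_finset]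
  congr 1
  ext i
  simp [minF]

/-- membership of `p` itself in minima of insertion -/
lemma self_mem_minF_insMax {σ : Perm (Fin n)} {p : Fin (n+1)} :
    p ∈ minF (n+1) (insMax σ p) ↔ (p:ℕ) = 0 := by
  constructor
  · intro h
    by_contra h0
    have hlt : (⟨0, by omega⟩ : Fin (n+1)) < p := by
      rw [Fin.lt_iff_val_lt_val]; show 0 < (p:ℕ); omega
    have := mem_minF.mp h _ hlt
    rw [insMax_self, insMax_apply_lt σ p _ (by simpa using Nat.pos_of_ne_zero h0)] at this
    exact absurd this (Fin.castSucc_lt_last _).asymm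
  · intro h0
    rw [mem_minF]
    intro j hj
    rw [Fin.lt_iff_val_lt_val] at hj
    omega

lemma succAbove_mem_minF_insMax {σ : Perm (Fin n)} {p : Fin (n+1)} {j : Fin n} :
    p.succAbove j ∈ minF (n+1) (insMax σ p) ↔ j ∈ minF n σ := by
  rw [mem_minF, mem_minF]
  constructor
  · intro h j' hj'
    have := h (p.succAbove j') (Fin.succAbove_lt_succAbove_iff.mpr hj')
    rwa [insMax_succAbove, insMax_succAbove, Fin.castSucc_lt_castSucc_iff] at this
  · intro h k hk
    rcases eq_or_ne k p with rfl | hne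
    · rw [insMax_self, insMax_succAbove]
      exact Fin.castSucc_lt_last _
    · obtain ⟨j', rfl⟩ := Fin.exists_succAbove_eq hne
      rw [insMax_succAbove, insMax_succAbove, Fin.castSucc_lt_castSucc_iff]
      exact h j' (Fin.succAbove_lt_succAbove_iff.mp hk)

lemma self_mem_maxF_insMax {σ : Perm (Fin n)} {p : Fin (n+1)} :
    p ∈ maxF (n+1) (insMax σ p) := by
  rw [mem_maxF]
  intro k hk
  rcases eq_or_ne k p with rfl | hne
  · exact absurd hk (lt_irrefl _)
  · obtain ⟨j', rfl⟩ := Fin.exists_succAbove_eq hne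
    rw [insMax_succAbove, insMax_self]
    exact Fin.castSucc_lt_last _

lemma succAbove_mem_maxF_insMax {σ : Perm (Fin n)} {p : Fin (n+1)} {j : Fin n} :
    p.succAbove j ∈ maxF (n+1) (insMax σ p) ↔ (j ∈ maxF n σ ∧ (j:ℕ) < (p:ℕ)) := by
  rcases Nat.lt_or_ge (j:ℕ) (p:ℕ) with hjp | hjp
  · simp only [hjp, and_true]
    rw [mem_maxF, mem_maxF]
    constructor
    · intro h j' hj'
      have := h (p.succAbove j') (Fin.succAbove_lt_succAbove_iff.mpr hj')
      rwa [insMax_succAbove, insMax_succAbove, Fin.castSucc_lt_castSucc_iff] at this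
    · intro h k hk
      have hkv : (k:ℕ) < (p.succAbove j : ℕ) := hk
      have hsav : ((p.succAbove j : Fin (n+1)):ℕ) = (j:ℕ) := by
        rw [Fin.succAbove_of_castSucc_lt]
        · simp
        · rw [Fin.lt_iff_val_lt_val]; simpa using hjp
      have hne : k ≠ p := by
        intro hkp
        subst hkp
        omega
      obtain ⟨j', rfl⟩ := Fin.exists_succAbove_eq hne
      rw [insMax_succAbove, insMax_succAbove, Fin.castSucc_lt_castSucc_iff]
      exact h j' (Fin.succAbove_lt_succAbove_iff.mp hk)
  · simp only [show ¬ ((j:ℕ) < (p:ℕ)) by omega, and_false, iff_false]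
    intro h
    have hpv : (p : ℕ) < (p.succAbove j : ℕ) := by
      rw [Fin.succAbove_of_le_castSucc]
      · simp; omega
      · rw [Fin.le_iff_val_le_val]; simpa using hjp
    have := mem_maxF.mp h p (by rwa [Fin.lt_iff_val_lt_val])
    rw [insMax_self, insMax_succAbove] at this
    exact absurd this (Fin.castSucc_lt_last _).asymm

lemma minF_insMax (σ : Perm (Fin n)) (p : Fin (n+1)) :
    minF (n+1) (insMax σ p) =
      (minF n σ).image p.succAbove ∪ (if (p:ℕ) = 0 then {p} else ∅) := by
  ext i
  simp only [Finset.mem_union, Finset.mem_image]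
  constructor
  · intro h
    rcases eq_or_ne i p with rfl | hne
    · right
      rw [self_mem_minF_insMax.mp h]
      simp
    · left
      obtain ⟨j, rfl⟩ := Fin.exists_succAbove_eq hne
      exact ⟨j, succAbove_mem_minF_insMax.mp h, rfl⟩
  · rintro (⟨j, hj, rfl⟩ | h)
    · exact succAbove_mem_minF_insMax.mpr hj
    · rcases Nat.eq_zero_or_pos (p:ℕ) with h0 | h0
      · rw [if_pos h0, Finset.mem_singleton] at h
        subst h
        exact self_mem_minF_insMax.mpr h0
      · rw [if_neg (by omega)] at h
        simp at h

lemma maxF_insMax (σ : Perm (Fin n)) (p : Fin (n+1)) :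
    maxF (n+1) (insMax σ p) =
      ((maxF n σ).filter (fun j : Fin n => (j:ℕ) < (p:ℕ))).image p.succAbove ∪ {p} := by
  ext i
  simp only [Finset.mem_union, Finset.mem_image, Finset.mem_filter, Finset.mem_singleton]
  constructor
  · intro h
    rcases eq_or_ne i p with rfl | hne
    · right; rfl
    · left
      obtain ⟨j, rfl⟩ := Fin.exists_succAbove_eq hne
      obtain ⟨h1, h2⟩ := succAbove_mem_maxF_insMax.mp h
      exact ⟨j, ⟨h1, h2⟩, rfl⟩
  · rintro (⟨j, ⟨h1, h2⟩, rfl⟩ | rfl)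
    · exact succAbove_mem_maxF_insMax.mpr ⟨h1, h2⟩
    · exact self_mem_maxF_insMax

lemma ltrMin_insMax (σ : Perm (Fin n)) (p : Fin (n+1)) :
    ltrMin (n+1) (insMax σ p) = ltrMin n σ + (if (p:ℕ) = 0 then 1 else 0) := by
  have hdisj : Disjoint ((minF n σ).image p.succAbove)
      (if (p:ℕ) = 0 then ({p} : Finset (Fin (n+1))) else ∅) := by
    split
    · rw [Finset.disjoint_singleton_right, Finset.mem_image]
      rintro ⟨j, _, hj⟩
      exact Fin.succAbove_ne p j hj
    · exact Finset.disjoint_empty_right _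
  rw [ltrMin_eq_card, ltrMin_eq_card, minF_insMax,
      Finset.card_union_of_disjoint hdisj,
      Finset.card_image_of_injective _ Fin.succAbove_right_injective]
  congr 1
  split
  · exact Finset.card_singleton _
  · exact Finset.card_empty

lemma maxF_card_insMax (σ : Perm (Fin n)) (p : Fin (n+1)) :
    (maxF (n+1) (insMax σ p)).card =
      ((maxF n σ).filter (fun j : Fin n => (j:ℕ) < (p:ℕ))).card + 1 := by
  have hdisj : Disjoint
      (((maxF n σ).filter (fun j : Fin n => (j:ℕ) < (p:ℕ))).image p.succAbove)
      ({p} : Finset (Fin (n+1))) := by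
    rw [Finset.disjoint_singleton_right, Finset.mem_image]
    rintro ⟨j, _, hj⟩
    exact Fin.succAbove_ne p j hj
  rw [maxF_insMax, Finset.card_union_of_disjoint hdisj,
      Finset.card_image_of_injective _ Fin.succAbove_right_injective,
      Finset.card_singleton]

/-! ### Section 4: avoidance -/

lemma insMax_apply_ne (σ : Perm (Fin n)) (p : Fin (n+1)) (x : ℕ) (hx : x < n+1)
    (hne : x ≠ (p:ℕ)) :
    insMax σ p ⟨x, hx⟩ =
      Fin.castSucc (σ ⟨if x < (p:ℕ) then x else x - 1, by split <;> omega⟩) := by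
  rcases Nat.lt_or_ge x (p:ℕ) with h | h
  · rw [insMax_apply_lt σ p ⟨x, hx⟩ h]
    congr 1
    congr 1
    exact Fin.ext (by simp [h])
  · have h' : (p:ℕ) < x := by omega
    rw [insMax_apply_gt σ p ⟨x, hx⟩ h']
    congr 1
    congr 1
    exact Fin.ext (by simp [Nat.not_lt.mpr h])

lemma avoids_insMax_iff (σ : Perm (Fin n)) (p : Fin (n+1)) :
    AvoidsBdAC (n+1) (insMax σ p) ↔
      (AvoidsBdAC n σ ∧
        ((p:ℕ) = 0 ∨ ∃ hq : (p:ℕ) - 1 < n, (⟨(p:ℕ)-1, hq⟩ : Fin n) ∈ maxF n σ)) := by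
  have hpn : (p:ℕ) ≤ n := by omega
  constructor
  · intro H
    constructor
    · -- σ avoids
      intro i j hi hj hij
      rintro ⟨h1, h2⟩
      by_cases hpj : (p:ℕ) = j + 1
      · -- use pattern (i, j, j+1=p) in π
        have hi' : i < n + 1 := by omega
        have hj' : j + 1 < n + 1 := by omega
        refine H i j hi' hj' hij ⟨?_, ?_⟩
        · rw [insMax_apply_ne σ p i hi' (by omega), insMax_apply_ne σ p j (by omega) (by omega),
              Fin.castSucc_lt_castSucc_iff]
          simp only [show (if i < (p:ℕ) then i else i - 1) = i from by split_ifs <;> omega,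
                     show (if j < (p:ℕ) then j else j - 1) = j from by split_ifs <;> omega]
          exact h1
        · rw [insMax_apply_ne σ p i hi' (by omega)]
          have : (⟨j+1, hj'⟩ : Fin (n+1)) = p := Fin.ext (by simp [hpj.symm])
          rw [this, insMax_self]
          exact Fin.castSucc_lt_last _
      · -- lift both positions
        have hli' : (if i < (p:ℕ) then i else i + 1) < n + 1 := by split <;> omega
        have hlj' : (if j < (p:ℕ) then j else j + 1) + 1 < n + 1 := by split <;> omega
        have hlij : (if i < (p:ℕ) then i else i + 1) < (if j < (p:ℕ) then j else j + 1) := by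
          split_ifs <;> omega
        refine H _ _ hli' hlj' hlij ⟨?_, ?_⟩
        · rw [insMax_apply_ne σ p _ hli' (by split_ifs <;> omega),
              insMax_apply_ne σ p _ (by omega) (by split_ifs <;> omega),
              Fin.castSucc_lt_castSucc_iff]
          simp only [show (if (if i < (p:ℕ) then i else i + 1) < (p:ℕ)
                then (if i < (p:ℕ) then i else i + 1)
                else (if i < (p:ℕ) then i else i + 1) - 1) = i from by split_ifs <;> omega,
              show (if (if j < (p:ℕ) then j else j + 1) < (p:ℕ)
                then (if j < (p:ℕ) then j else j + 1)
                else (if j < (p:ℕ) then j else j + 1) - 1) = j from by split_ifs <;> omega]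
          exact h1
        · rw [insMax_apply_ne σ p _ hli' (by split_ifs <;> omega),
              insMax_apply_ne σ p _ hlj' (by split_ifs <;> omega),
              Fin.castSucc_lt_castSucc_iff]
          simp only [show (if (if i < (p:ℕ) then i else i + 1) < (p:ℕ)
                then (if i < (p:ℕ) then i else i + 1)
                else (if i < (p:ℕ) then i else i + 1) - 1) = i from by split_ifs <;> omega,
              show (if (if j < (p:ℕ) then j else j + 1) + 1 < (p:ℕ)
                then (if j < (p:ℕ) then j else j + 1) + 1
                else (if j < (p:ℕ) then j else j + 1) + 1 - 1) = j + 1 from by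
                  split_ifs <;> omega]
          exact h2
    · -- max condition
      by_cases hp0 : (p:ℕ) = 0
      · exact Or.inl hp0
      · right
        have hq : (p:ℕ) - 1 < n := by omega
        refine ⟨hq, ?_⟩
        rw [mem_maxF]
        intro j' hj'
        by_contra hcon
        have hne : σ j' ≠ σ ⟨(p:ℕ)-1, hq⟩ := fun h => by
          have := σ.injective h
          rw [this] at hj'
          exact absurd hj' (lt_irrefl _)
        have hgt : σ ⟨(p:ℕ)-1, hq⟩ < σ j' := by
          rcases lt_trichotomy (σ j') (σ ⟨(p:ℕ)-1, hq⟩) with h | h | h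
          · exact absurd h hcon
          · exact absurd h hne
          · exact h
        have hj'v : (j':ℕ) < (p:ℕ) - 1 := hj'
        refine H (j':ℕ) ((p:ℕ)-1) (by omega) (by omega) (by omega) ⟨?_, ?_⟩
        · rw [insMax_apply_ne σ p (j':ℕ) (by omega) (by omega),
              insMax_apply_ne σ p ((p:ℕ)-1) (by omega) (by omega),
              Fin.castSucc_lt_castSucc_iff]
          simp only [show (if (j':ℕ) < (p:ℕ) then (j':ℕ) else (j':ℕ) - 1) = (j':ℕ) from by
                  split_ifs <;> omega,
              show (if (p:ℕ)-1 < (p:ℕ) then (p:ℕ)-1 else (p:ℕ)-1-1) = (p:ℕ)-1 from by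
                  split_ifs <;> omega]
          have : (⟨(j':ℕ), by omega⟩ : Fin n) = j' := Fin.ext rfl
          rw [this]
          exact hgt
        · rw [insMax_apply_ne σ p (j':ℕ) (by omega) (by omega)]
          have : (⟨(p:ℕ)-1+1, by omega⟩ : Fin (n+1)) = p := Fin.ext (by simp; omega)
          rw [this, insMax_self]
          exact Fin.castSucc_lt_last _
  · rintro ⟨Hσ, Hp⟩
    intro i j hi hj hij
    rintro ⟨h1, h2⟩
    by_cases hjp1 : j + 1 = (p:ℕ)
    · -- j+1 = p : contradicts max condition
      rcases Hp with hp0 | ⟨hq, hmax⟩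
      · omega
      · have hie : i < (p:ℕ) := by omega
        have hje : j < (p:ℕ) := by omega
        rw [insMax_apply_ne σ p i hi (by omega),
            insMax_apply_ne σ p j (by omega) (by omega),
            Fin.castSucc_lt_castSucc_iff] at h1
        simp only [show (if i < (p:ℕ) then i else i - 1) = i from by split_ifs <;> omega,
            show (if j < (p:ℕ) then j else j - 1) = (p:ℕ) - 1 from by split_ifs <;> omega]
            at h1
        have hmax' := mem_maxF.mp hmax ⟨i, by omega⟩
          (by rw [Fin.lt_iff_val_lt_val]; simp; omega)
        exact absurd hmax' h1.asymm
    · by_cases hjp : j = (p:ℕ)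
      · have : (⟨j, by omega⟩ : Fin (n+1)) = p := Fin.ext (by simpa using hjp)
        rw [this, insMax_self] at h1
        rw [insMax_apply_ne σ p i hi (by omega)] at h1
        exact absurd h1 (Fin.castSucc_lt_last _).asymm
      · by_cases hip : i = (p:ℕ)
        · have : (⟨i, hi⟩ : Fin (n+1)) = p := Fin.ext (by simpa using hip)
          rw [this, insMax_self] at h2
          rw [insMax_apply_ne σ p (j+1) hj (by omega)] at h2
          exact absurd h2 (Fin.castSucc_lt_last _).asymm
        · -- drop all three positions
          have hdi' : (if i < (p:ℕ) then i else i - 1) < n := by split <;> omega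
          have hdj' : (if j < (p:ℕ) then j else j - 1) + 1 < n := by split <;> omega
          have hdij : (if i < (p:ℕ) then i else i - 1) < (if j < (p:ℕ) then j else j - 1) := by
            split_ifs <;> omega
          refine Hσ _ _ hdi' hdj' hdij ⟨?_, ?_⟩
          · rw [insMax_apply_ne σ p i hi (by omega),
                insMax_apply_ne σ p j (by omega) (by omega),
                Fin.castSucc_lt_castSucc_iff] at h1
            exact h1
          · rw [insMax_apply_ne σ p i hi (by omega),
                insMax_apply_ne σ p (j+1) hj (by omega),
                Fin.castSucc_lt_castSucc_iff] at h2
            simp only [show (if j + 1 < (p:ℕ) then j + 1 else j + 1 - 1)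
                = (if j < (p:ℕ) then j else j - 1) + 1 from by split_ifs <;> omega] at h2
            exact h2

/-! ### Section 5a: m-th smallest element of a finset -/

section Nth
variable {α : Type*} [LinearOrder α]

lemma nth_uniq (F : Finset α) (q₁ q₂ : α) (h₁ : q₁ ∈ F) (h₂ : q₂ ∈ F)
    (h : (F.filter (· ≤ q₁)).card = (F.filter (· ≤ q₂)).card) : q₁ = q₂ := by
  have key : ∀ a b : α, a ∈ F → b ∈ F → a < b →
      (F.filter (· ≤ a)).card < (F.filter (· ≤ b)).card := by
    intro a b ha hb hab
    apply Finset.card_lt_card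
    constructor
    · intro x hx
      rw [Finset.mem_filter] at hx ⊢
      exact ⟨hx.1, le_trans hx.2 hab.le⟩
    · intro hsub
      have : b ∈ F.filter (· ≤ a) := hsub (by rw [Finset.mem_filter]; exact ⟨hb, le_refl b⟩)
      rw [Finset.mem_filter] at this
      exact absurd hab (not_lt.mpr this.2)
  rcases lt_trichotomy q₁ q₂ with hlt | heq | hgt
  · exact absurd h (Nat.ne_of_lt (key _ _ h₁ h₂ hlt))
  · exact heq
  · exact absurd h.symm (Nat.ne_of_lt (key _ _ h₂ h₁ hgt))

lemma nth_ex (m : ℕ) (hm : 1 ≤ m) : ∀ (F : Finset α), m ≤ F.card →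
    ∃ q ∈ F, (F.filter (· ≤ q)).card = m := by
  induction m with
  | zero => omega
  | succ m ih =>
    intro F hF
    rcases Nat.eq_zero_or_pos m with rfl | hm'
    · -- m = 0 : take the minimum
      have hne : F.Nonempty := Finset.card_pos.mp (by omega)
      refine ⟨F.min' hne, F.min'_mem hne, ?_⟩
      have : F.filter (· ≤ F.min' hne) = {F.min' hne} := by
        ext x
        rw [Finset.mem_filter, Finset.mem_singleton]
        constructor
        · rintro ⟨hx, hle⟩
          exact le_antisymm hle (F.min'_le x hx)
        · rintro rfl
          exact ⟨F.min'_mem hne, le_refl _⟩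
      rw [this, Finset.card_singleton]
    · obtain ⟨q, hq, hcard⟩ := ih hm' F (by omega)
      have hne : (F.filter (q < ·)).Nonempty := by
        rw [Finset.filter_nonempty_iff]
        by_contra hcon
        push_neg at hcon
        have : F.filter (· ≤ q) = F := by
          apply Finset.filter_true_of_mem
          intro x hx
          exact hcon x hx
        rw [this] at hcard
        omega
      set q' := (F.filter (q < ·)).min' hne with hq'
      have hq'F : q' ∈ F ∧ q < q' := by
        have := (F.filter (q < ·)).min'_mem hne
        rw [Finset.mem_filter] at this
        exact this
      refine ⟨q', hq'F.1, ?_⟩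
      have hins : F.filter (· ≤ q') = insert q' (F.filter (· ≤ q)) := by
        ext x
        rw [Finset.mem_filter, Finset.mem_insert, Finset.mem_filter]
        constructor
        · rintro ⟨hx, hle⟩
          rcases le_or_gt x q with h | h
          · exact Or.inr ⟨hx, h⟩
          · left
            have : q' ≤ x := (F.filter (q < ·)).min'_le x (by
              rw [Finset.mem_filter]; exact ⟨hx, h⟩)
            exact le_antisymm hle this
        · rintro (rfl | ⟨hx, hle⟩)
          · exact ⟨hq'F.1, le_refl _⟩
          · exact ⟨hx, le_trans hle hq'F.2.le⟩
      rw [hins, Finset.card_insert_of_notMem (by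
        rw [Finset.mem_filter]
        rintro ⟨-, hle⟩
        exact absurd hq'F.2 (not_lt.mpr hle)), hcard]

end Nth

/-! ### Section 5b: counting sets -/

attribute [local instance] Classical.propDecidable

noncomputable def Af (n k : ℕ) : Finset (Perm (Fin n)) :=
  Finset.univ.filter (fun π => AvoidsBdAC n π ∧ ltrMin n π = k)

noncomputable def Bf (n k m : ℕ) : Finset (Perm (Fin n)) :=
  Finset.univ.filter (fun π => AvoidsBdAC n π ∧ ltrMin n π = k ∧ (maxF n π).card = m)

noncomputable def Gf (n k m : ℕ) : Finset (Perm (Fin n)) :=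
  Finset.univ.filter (fun π => AvoidsBdAC n π ∧ ltrMin n π = k ∧ m ≤ (maxF n π).card)

lemma mem_Af {k : ℕ} {π : Perm (Fin n)} :
    π ∈ Af n k ↔ AvoidsBdAC n π ∧ ltrMin n π = k := by
  rw [Af, Finset.mem_filter]
  simp

lemma mem_Bf {k m : ℕ} {π : Perm (Fin n)} :
    π ∈ Bf n k m ↔ AvoidsBdAC n π ∧ ltrMin n π = k ∧ (maxF n π).card = m := by
  rw [Bf, Finset.mem_filter]
  simp

lemma mem_Gf {k m : ℕ} {π : Perm (Fin n)} :
    π ∈ Gf n k m ↔ AvoidsBdAC n π ∧ ltrMin n π = k ∧ m ≤ (maxF n π).card := by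
  rw [Gf, Finset.mem_filter]
  simp

lemma Af_card_eq_sum (hn : 1 ≤ n) (k : ℕ) :
    (Af n k).card = ∑ m ∈ Finset.Icc 1 n, (Bf n k m).card := by
  classical
  rw [Finset.card_eq_sum_card_fiberwise
    (f := fun π => (maxF n π).card) (t := Finset.Icc 1 n)
    (fun π _ => Finset.mem_Icc.mpr ⟨maxF_card_pos hn π, maxF_card_le π⟩)]
  refine Finset.sum_congr rfl (fun m _ => ?_)
  congr 1
  ext π
  simp only [Finset.mem_filter, mem_Af, mem_Bf]
  tauto

lemma Gf_card_eq_sum (hn : 1 ≤ n) (k m : ℕ) (hm : 1 ≤ m) :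
    (Gf n k m).card = ∑ m' ∈ Finset.Icc m n, (Bf n k m').card := by
  classical
  rw [Finset.card_eq_sum_card_fiberwise
    (f := fun π => (maxF n π).card) (t := Finset.Icc m n)
    (fun π hπ => Finset.mem_Icc.mpr ⟨(mem_Gf.mp hπ).2.2, maxF_card_le π⟩)]
  refine Finset.sum_congr rfl (fun m' hm' => ?_)
  rw [Finset.mem_Icc] at hm'
  congr 1
  ext π
  simp only [Finset.mem_filter, mem_Gf, mem_Bf]
  constructor
  · rintro ⟨⟨h1, h2, h3⟩, h4⟩
    exact ⟨h1, h2, h4⟩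
  · rintro ⟨h1, h2, h3⟩
    exact ⟨⟨h1, h2, h3 ▸ hm'.1⟩, h3⟩

lemma insMax_symm_last (σ : Perm (Fin n)) (p : Fin (n+1)) :
    (insMax σ p).symm (Fin.last n) = p := by
  rw [Equiv.symm_apply_eq, insMax_self]

lemma Bf_one_card (n k : ℕ) (hk : 1 ≤ k) : (Bf (n+1) k 1).card = (Af n (k-1)).card := by
  symm
  apply Finset.card_bij (fun σ _ => insMax σ (0 : Fin (n+1)))
  · intro σ hσ
    rw [mem_Af] at hσ
    rw [mem_Bf]
    refine ⟨(avoids_insMax_iff σ 0).mpr ⟨hσ.1, Or.inl (by simp)⟩, ?_, ?_⟩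
    · rw [ltrMin_insMax, hσ.2]
      simp
      omega
    · rw [maxF_card_insMax]
      have : (maxF n σ).filter (fun j : Fin n => (j:ℕ) < ((0 : Fin (n+1)):ℕ)) = ∅ := by
        apply Finset.filter_false_of_mem
        intro j _
        simp
      rw [this, Finset.card_empty]
  · intro σ₁ h₁ σ₂ h₂ h
    exact (insMax_injective2 h).1
  · intro π hπ
    obtain ⟨σ, p, rfl⟩ := exists_insMax π
    rw [mem_Bf] at hπ
    obtain ⟨hav, hmin, hmax⟩ := hπ
    have hp0 : (p:ℕ) = 0 := by
      by_contra h0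
      have hn1 : 0 < n := by omega
      rw [maxF_card_insMax] at hmax
      have hfe : ((maxF n σ).filter (fun j : Fin n => (j:ℕ) < (p:ℕ))).card = 0 := by omega
      have : (⟨0, hn1⟩ : Fin n) ∈ (maxF n σ).filter (fun j : Fin n => (j:ℕ) < (p:ℕ)) := by
        rw [Finset.mem_filter]
        exact ⟨zero_mem_maxF hn1 σ, by show 0 < (p:ℕ); omega⟩
      rw [Finset.card_eq_zero] at hfe
      rw [hfe] at this
      exact absurd this (Finset.notMem_empty _)
    have hpe : p = 0 := Fin.ext (by simpa using hp0)
    refine ⟨σ, ?_, by rw [hpe]⟩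
    rw [mem_Af]
    refine ⟨((avoids_insMax_iff σ p).mp hav).1, ?_⟩
    rw [ltrMin_insMax, if_pos hp0] at hmin
    omega

lemma Bf_succ_card (n k m : ℕ) (hm : 1 ≤ m) :
    (Bf (n+1) k (m+1)).card = (Gf n k m).card := by
  classical
  have hL : Bf (n+1) k (m+1) = Finset.univ.biUnion (fun q : Fin n =>
      (Bf (n+1) k (m+1)).filter (fun π => π.symm (Fin.last n) = q.succ)) := by
    ext π
    simp only [Finset.mem_biUnion, Finset.mem_univ, Finset.mem_filter, true_and]
    constructor
    · intro h
      obtain ⟨σ, p, rfl⟩ := exists_insMax π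
      have hp0 : (p:ℕ) ≠ 0 := by
        intro h0
        have hmax := (mem_Bf.mp h).2.2
        rw [maxF_card_insMax] at hmax
        have : (maxF n σ).filter (fun j : Fin n => (j:ℕ) < (p:ℕ)) = ∅ :=
          Finset.filter_false_of_mem (fun j _ => by omega)
        rw [this] at hmax
        simp at hmax
        omega
      have hpn : (p:ℕ) - 1 < n := by omega
      refine ⟨⟨(p:ℕ) - 1, hpn⟩, h, ?_⟩
      rw [insMax_symm_last]
      ext
      simp
      omega
    · rintro ⟨q, h, -⟩
      exact h
  have hR : Gf n k m = Finset.univ.biUnion (fun q : Fin n =>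
      (Gf n k m).filter (fun σ => q ∈ maxF n σ ∧ ((maxF n σ).filter (· ≤ q)).card = m)) := by
    ext σ
    simp only [Finset.mem_biUnion, Finset.mem_univ, Finset.mem_filter, true_and]
    constructor
    · intro h
      obtain ⟨q, hq, hcard⟩ := nth_ex m hm (maxF n σ) (mem_Gf.mp h).2.2
      exact ⟨q, h, hq, hcard⟩
    · rintro ⟨q, h, -⟩
      exact h
  rw [hL, hR, Finset.card_biUnion, Finset.card_biUnion]
  rotate_left
  · intro q₁ _ q₂ _ hne
    simp only [Function.onFun]
    rw [Finset.disjoint_left]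
    rintro σ h₁ h₂
    rw [Finset.mem_filter] at h₁ h₂
    exact hne (nth_uniq _ _ _ h₁.2.1 h₂.2.1 (h₁.2.2.trans h₂.2.2.symm))
  · intro q₁ _ q₂ _ hne
    simp only [Function.onFun]
    rw [Finset.disjoint_left]
    rintro π h₁ h₂
    rw [Finset.mem_filter] at h₁ h₂
    exact hne (Fin.succ_injective n (h₁.2.symm.trans h₂.2))
  refine Finset.sum_congr rfl (fun q _ => ?_)
  symm
  apply Finset.card_bij (fun σ _ => insMax σ q.succ)
  · intro σ hσ
    rw [Finset.mem_filter, mem_Gf] at hσ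
    obtain ⟨⟨hav, hmin, hle⟩, hqmem, hcount⟩ := hσ
    have hsv : ((q.succ : Fin (n+1)) : ℕ) = (q:ℕ) + 1 := Fin.val_succ q
    rw [Finset.mem_filter, mem_Bf]
    refine ⟨⟨?_, ?_, ?_⟩, insMax_symm_last σ q.succ⟩
    · refine (avoids_insMax_iff σ q.succ).mpr ⟨hav, Or.inr ⟨by omega, ?_⟩⟩
      have : (⟨((q.succ : Fin (n+1)) : ℕ) - 1, by omega⟩ : Fin n) = q := Fin.ext (by simp)
      rw [this]
      exact hqmem
    · rw [ltrMin_insMax, if_neg (by omega)]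
      omega
    · rw [maxF_card_insMax]
      have : (maxF n σ).filter (fun j : Fin n => (j:ℕ) < ((q.succ : Fin (n+1)):ℕ))
          = (maxF n σ).filter (· ≤ q) := by
        apply Finset.filter_congr
        intro j _
        simp only [hsv, Fin.le_def]
        constructor
        · intro h; simp; omega
        · intro h; simp at h ⊢; omega
      rw [this, hcount]
  · intro σ₁ h₁ σ₂ h₂ h
    exact (insMax_injective2 h).1
  · intro π hπ
    rw [Finset.mem_filter, mem_Bf] at hπ
    obtain ⟨⟨hav, hmin, hmax⟩, hlast⟩ := hπ
    obtain ⟨σ, p, rfl⟩ := exists_insMax π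
    have hps : p = q.succ := by rw [insMax_symm_last] at hlast; exact hlast
    subst hps
    have hsv : ((q.succ : Fin (n+1)) : ℕ) = (q:ℕ) + 1 := Fin.val_succ q
    obtain ⟨havσ, hmc⟩ := (avoids_insMax_iff σ q.succ).mp hav
    have hqmem : q ∈ maxF n σ := by
      rcases hmc with h0 | ⟨hq', hmem⟩
      · omega
      · have : (⟨((q.succ : Fin (n+1)) : ℕ) - 1, hq'⟩ : Fin n) = q := Fin.ext (by simp)
        rw [this] at hmem
        exact hmem
    have hfilter : (maxF n σ).filter (fun j : Fin n => (j:ℕ) < ((q.succ : Fin (n+1)):ℕ))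
        = (maxF n σ).filter (· ≤ q) := by
      apply Finset.filter_congr
      intro j _
      simp only [hsv, Fin.le_def]
      constructor
      · intro h; simp; omega
      · intro h; simp at h ⊢; omega
    have hcount : ((maxF n σ).filter (· ≤ q)).card = m := by
      rw [maxF_card_insMax, hfilter] at hmax
      omega
    refine ⟨σ, ?_, rfl⟩
    rw [Finset.mem_filter, mem_Gf]
    have hminσ : ltrMin n σ = k := by
      rw [ltrMin_insMax, if_neg (by omega)] at hmin
      omega
    refine ⟨⟨havσ, hminσ, ?_⟩, hqmem, hcount⟩
    rw [← hcount]
    exact Finset.card_le_card (Finset.filter_subset _ _)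

/-! ### Section 6: the induction -/

/-- Ballot/Catalan triangle numbers. -/
def Dnum (n t : ℕ) : ℕ :=
  if t ≤ n then (2*n - t - 1).choose (n-1) - (2*n - t - 1).choose n else 0

lemma Dnum_mono (n t : ℕ) (hn : 1 ≤ n) (ht : t ≤ n) :
    (2*n - t - 1).choose n ≤ (2*n - t - 1).choose (n-1) := by
  rcases Nat.eq_zero_or_pos t with h0 | hpos
  · subst h0
    have e : 2*n - 0 - 1 = 2*(n-1) + 1 := by omega
    rw [e]
    have := Nat.choose_symm_half (n-1)
    rw [show n - 1 + 1 = n by omega] at this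
    omega
  · rcases Nat.lt_or_ge (2*n - t - 1) n with hlt | hge
    · simp [Nat.choose_eq_zero_of_lt hlt]
    · set N := 2*n - t - 1 with hN
      have s1 : N.choose n = N.choose (N - n) := (Nat.choose_symm hge).symm
      have s2 : N.choose (n-1) = N.choose (N - (n-1)) := (Nat.choose_symm (by omega)).symm
      have e1 : N - n = n - t - 1 := by omega
      have e2 : N - (n-1) = n - t := by omega
      rw [s1, s2, e1, e2, show n - t = (n - t - 1) + 1 by omega]
      exact Nat.choose_le_succ_of_lt_half_left (by omega)

lemma Dnum_zero_right (n : ℕ) (hn : 1 ≤ n) : Dnum n 0 = 0 := by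
  unfold Dnum
  rw [if_pos (by omega : (0:ℕ) ≤ n)]
  have e : 2*n - 0 - 1 = 2*(n-1) + 1 := by omega
  rw [e]
  have := Nat.choose_symm_half (n-1)
  rw [show n - 1 + 1 = n by omega] at this
  omega

lemma Dnum_vanish (n t : ℕ) (h : n < t) : Dnum n t = 0 := by
  unfold Dnum
  rw [if_neg (by omega)]

lemma Dnum_pascal (n t : ℕ) (hn : 1 ≤ n) (ht : 1 ≤ t) (htn : t ≤ n) :
    Dnum (n+1) t = Dnum n (t-1) + Dnum (n+1) (t+1) := by
  unfold Dnum
  rw [if_pos (by omega : t ≤ n + 1), if_pos (by omega : t - 1 ≤ n), if_pos (by omega : t + 1 ≤ n + 1)]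
  have e1 : 2*(n+1) - t - 1 = (2*n - t) + 1 := by omega
  have e2 : 2*n - (t-1) - 1 = 2*n - t := by omega
  have e3 : 2*(n+1) - (t+1) - 1 = 2*n - t := by omega
  have e4 : n + 1 - 1 = n := by omega
  rw [e1, e2, e3, e4]
  have p1 := Nat.choose_succ_succ (2*n - t) (n-1)
  simp only [Nat.succ_eq_add_one] at p1
  rw [show n - 1 + 1 = n by omega] at p1
  have p2 := Nat.choose_succ_succ (2*n - t) n
  simp only [Nat.succ_eq_add_one] at p2
  have m1 := Dnum_mono n (t-1) hn (by omega)
  rw [e2] at m1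
  have m2 := Dnum_mono (n+1) (t+1) (by omega) (by omega)
  rw [e3, e4] at m2
  omega

lemma Dnum_rec (n t : ℕ) (hn : 1 ≤ n) (ht : 1 ≤ t) (htn : t ≤ n + 1) :
    Dnum (n+1) t = ∑ s ∈ Finset.Icc (t-1) n, Dnum n s := by
  rcases Nat.exists_eq_add_of_le htn with ⟨d, hd⟩
  clear htn
  induction d generalizing t with
  | zero =>
    have : t = n + 1 := by omega
    subst this
    rw [show n + 1 - 1 = n from rfl, Finset.Icc_self, Finset.sum_singleton]
    unfold Dnum
    rw [if_pos (by omega : n + 1 ≤ n + 1), if_pos (by omega : n ≤ n)]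
    have e1 : 2*(n+1) - (n+1) - 1 = n := by omega
    have e2 : 2*n - n - 1 = n - 1 := by omega
    rw [e1, e2, show n+1-1 = n from rfl]
    rw [Nat.choose_self, Nat.choose_self,
        Nat.choose_eq_zero_of_lt (by omega : n < n + 1),
        Nat.choose_eq_zero_of_lt (by omega : n - 1 < n)]
  | succ d ih =>
    have h1 : Dnum (n+1) (t+1) = ∑ s ∈ Finset.Icc t n, Dnum n s :=
      ih (t+1) (by omega) (by omega)
    have hsplit : Finset.Icc (t-1) n = insert (t-1) (Finset.Icc t n) := by
      rw [show Finset.Icc t n = Finset.Icc ((t-1)+1) n by rw [show t - 1 + 1 = t by omega]]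
      exact (Finset.insert_Icc_add_one_left_eq_Icc (by omega)).symm
    rw [hsplit, Finset.sum_insert (by simp [Finset.mem_Icc]; omega), ← h1]
    exact Dnum_pascal n t hn ht (by omega)

lemma Dnum_ballot (n k : ℕ) (hk : 1 ≤ k) (hkn : k ≤ n) :
    (2*n - k) * Dnum n k = k * ((2*n - k).choose n) := by
  set m := 2*n - k with hm
  have hm1 : m - 1 = 2*n - k - 1 := by omega
  have hmn : n ≤ m := by omega
  -- m * C(m-1, n-1) = n * C(m, n)
  have key1 : m * (m-1).choose (n-1) = n * m.choose n := by
    have := Nat.add_one_mul_choose_eq (m-1) (n-1)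
    rw [show m - 1 + 1 = m by omega, show n - 1 + 1 = n by omega] at this
    rw [this]; ring
  -- m * C(m-1, n) = (m - n) * C(m, n)
  have key2 : m * (m-1).choose n = (m - n) * m.choose n := by
    rcases Nat.eq_or_lt_of_le hmn with he | hlt
    · rw [← he]
      simp [Nat.choose_eq_zero_of_lt (by omega : n - 1 < n)]
    · have s1 : (m-1).choose n = (m-1).choose (m-1-n) := (Nat.choose_symm (by omega)).symm
      have := Nat.add_one_mul_choose_eq (m-1) (m-1-n)
      rw [show m - 1 + 1 = m by omega, show m - 1 - n + 1 = m - n by omega] at this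
      rw [s1, this, Nat.choose_symm hmn]
      ring
  have hmono := Dnum_mono n k (by omega) hkn
  unfold Dnum
  rw [if_pos hkn, ← hm1]
  rw [Nat.mul_sub, key1, key2, ← Nat.sub_mul, show n - (m - n) = k by omega]

def Tnum : ℕ → ℕ → ℕ → ℕ
  | 0, k, m => if k = 1 ∧ m = 1 then 1 else 0
  | (n+1), k, m => Dnum (n+1) (k+m-2)

lemma sumT' (n k m : ℕ) (hk : 1 ≤ k) (hm : 1 ≤ m) :
    ∑ m' ∈ Finset.Icc m (n+1), Tnum n k m' = Dnum (n+1) (k+m-1) := by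
  cases n with
  | zero =>
    rcases Nat.lt_or_ge m 2 with hm2 | hm2
    · have : m = 1 := by omega
      subst this
      rw [Finset.Icc_self, Finset.sum_singleton]
      show (if k = 1 ∧ 1 = 1 then 1 else 0) = Dnum 1 k
      rcases Nat.eq_or_lt_of_le hk with h1 | h1
      · rw [if_pos ⟨h1.symm, rfl⟩, ← h1]
        decide
      · rw [if_neg (by omega), Dnum_vanish 1 k (by omega)]
    · rw [show Finset.Icc m 1 = ∅ by rw [Finset.Icc_eq_empty_iff]; omega,
          Finset.sum_empty, Dnum_vanish 1 (k+m-1) (by omega)]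
  | succ N =>
    simp only [Tnum]
    by_cases hc : k + m - 1 ≤ N + 2
    · rw [Dnum_rec (N+1) (k+m-1) (by omega) (by omega) (by omega)]
      have hre : ∑ m' ∈ Finset.Icc m (N+2), Dnum (N+1) (k+m'-2)
          = ∑ s ∈ Finset.Icc (k+m-2) (k+N), Dnum (N+1) s := by
        refine Finset.sum_nbij' (fun m' => k + m' - 2) (fun s => s + 2 - k)
          ?_ ?_ ?_ ?_ ?_ <;>
          intro a ha <;> rw [Finset.mem_Icc] at ha <;>
          first
            | rfl
            | (rw [Finset.mem_Icc]; omega)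
            | omega
            | (congr 1; omega)
      rw [hre]
      symm
      apply Finset.sum_subset
      · apply Finset.Icc_subset_Icc_right
        omega
      · intro s hs hns
        rw [Finset.mem_Icc] at hs
        rw [Finset.mem_Icc] at hns
        exact Dnum_vanish (N+1) s (by omega)
    · rw [Dnum_vanish (N+2) (k+m-1) (by omega)]
      apply Finset.sum_eq_zero
      intro m' hm'
      rw [Finset.mem_Icc] at hm'
      exact Dnum_vanish (N+1) (k+m'-2) (by omega)

lemma Bf_card_eq_Tnum : ∀ n k m, 1 ≤ k → 1 ≤ m → (Bf (n+1) k m).card = Tnum n k m := by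
  intro n
  induction n with
  | zero =>
    intro k m hk hm
    have h1 : ∀ π : Perm (Fin 1), AvoidsBdAC 1 π := by
      intro π i j hi hj hij
      omega
    have h2 : ∀ π : Perm (Fin 1), ltrMin 1 π = 1 := by
      intro π
      rw [ltrMin_eq_card]
      have : minF 1 π = Finset.univ := by
        ext i
        simp only [mem_minF, Finset.mem_univ, iff_true]
        intro j hj
        rw [Fin.lt_iff_val_lt_val] at hj
        omega
      rw [this]
      simp
    have h3 : ∀ π : Perm (Fin 1), (maxF 1 π).card = 1 := by
      intro π
      have : maxF 1 π = Finset.univ := by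
        ext i
        simp only [mem_maxF, Finset.mem_univ, iff_true]
        intro j hj
        rw [Fin.lt_iff_val_lt_val] at hj
        omega
      rw [this]
      simp
    have key : ∀ π : Perm (Fin 1), π ∈ Bf 1 k m ↔ (k = 1 ∧ m = 1) := by
      intro π
      rw [mem_Bf, h2 π, h3 π]
      constructor
      · rintro ⟨-, a, b⟩
        exact ⟨a.symm, b.symm⟩
      · rintro ⟨rfl, rfl⟩
        exact ⟨h1 π, rfl, rfl⟩
    show _ = if k = 1 ∧ m = 1 then 1 else 0
    split_ifs with h
    · have : Bf 1 k m = Finset.univ := by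
        apply Finset.eq_univ_of_forall
        intro π
        rw [key π]
        exact h
      rw [this, Finset.card_univ]
      simp
    · have : Bf 1 k m = ∅ := by
        rw [Finset.eq_empty_iff_forall_notMem]
        intro π hπ
        exact h ((key π).mp hπ)
      rw [this, Finset.card_empty]
  | succ N ih =>
    intro k m hk hm
    rcases m with _ | m'
    · omega
    rcases Nat.eq_zero_or_pos m' with rfl | hm'
    · -- m = 1
      rw [Bf_one_card _ _ hk]
      rcases Nat.eq_or_lt_of_le hk with h1 | h1
      · -- k = 1
        have : Af (N+1) (k-1) = ∅ := by
          rw [Finset.eq_empty_iff_forall_notMem]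
          intro π h
          have hmin := (mem_Af.mp h).2
          rw [ltrMin_eq_card] at hmin
          have := minF_card_pos (by omega) π
          omega
        rw [this, Finset.card_empty]
        show 0 = Dnum (N+1) (k+1-2)
        rw [show k + 1 - 2 = 0 by omega, Dnum_zero_right (N+1) (by omega)]
      · -- k ≥ 2
        rw [Af_card_eq_sum (by omega)]
        rw [Finset.sum_congr rfl
          (fun m'' hm'' => ih (k-1) m'' (by omega) (Finset.mem_Icc.mp hm'').1)]
        rw [sumT' N (k-1) 1 (by omega) le_rfl]
        show Dnum (N+1) (k-1+1-1) = Dnum (N+1) (k+1-2)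
        congr 1
    · -- m = m'+1, m' ≥ 1
      rw [Bf_succ_card (N+1) k m' hm']
      rw [Gf_card_eq_sum (by omega) k m' hm']
      rw [Finset.sum_congr rfl
        (fun m'' hm'' => ih k m'' hk (le_trans hm' (Finset.mem_Icc.mp hm'').1))]
      rw [sumT' N k m' hk hm']
      show Dnum (N+1) (k+m'-1) = Dnum (N+1) (k+(m'+1)-2)
      congr 1

lemma Af_card_eq (n k : ℕ) (hk : 1 ≤ k) : (Af (n+1) k).card = Dnum (n+1) k := by
  rw [Af_card_eq_sum (by omega)]
  rw [Finset.sum_congr rfl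
    (fun m hm => Bf_card_eq_Tnum n k m hk (Finset.mem_Icc.mp hm).1)]
  rw [sumT' n k 1 hk le_rfl]
  congr 1

theorem avoid_bdac_ltrmin_eq_ballot' (n k : ℕ) (hn : 1 ≤ n) (hk : k ≤ n) :
    (2 * n - k) *
        {π : Equiv.Perm (Fin n) | AvoidsBdAC n π ∧ ltrMin n π = k}.ncard =
      k * (2 * n - k).choose n := by
  have hbridge : {π : Equiv.Perm (Fin n) | AvoidsBdAC n π ∧ ltrMin n π = k}.ncard
      = (Af n k).card := by
    rw [← Set.ncard_coe_finset]
    congr 1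
    ext π
    simp [mem_Af]
  rcases Nat.eq_zero_or_pos k with rfl | hk1
  · have : Af n 0 = ∅ := by
      rw [Finset.eq_empty_iff_forall_notMem]
      intro π h
      have h2 := (mem_Af.mp h).2
      rw [ltrMin_eq_card] at h2
      have := minF_card_pos (by omega) π
      omega
    rw [hbridge, this]
    simp
  · rcases n with _ | N
    · omega
    rw [hbridge, Af_card_eq N k hk1]
    exact Dnum_ballot (N+1) k hk1 hk


/-- The number of (b-ac)-avoiding permutations of `[n]` with exactly `k`
left-to-right minima is the ballot number `(k/(2n-k))·C(2n-k, n)`. -/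
theorem avoid_bdac_ltrmin_eq_ballot (n k : ℕ) (hn : 1 ≤ n) (hk : k ≤ n) :
    (2 * n - k) *
        {π : Equiv.Perm (Fin n) | AvoidsBdAC n π ∧ ltrMin n π = k}.ncard =
      k * (2 * n - k).choose n :=
  avoid_bdac_ltrmin_eq_ballot' n k hn hk
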